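/- Let H and K be real Hilbert spaces, ι : H → K a bounded linear operator with dense range, and b ∈ K. Let (λₙ) be a sequence of positive reals with λₙ → 0, and set x_{λₙ} = (ι*ι + λₙI)⁻¹ι*b. Let (Ω, ℱ, P) be a probability space and x̂ₙ : Ω → H random elements such that ‖x̂ₙ − x_{λₙ}‖_H → 0 in probability as n → ∞. Then ‖ι x̂ₙ − b‖_K → 0 in probability as n → ∞. -/

import Mathlib

open MeasureTheory Filter RealInnerProductSpace

/-- Assembly of the proof of Theorem 5.2 (universal consistency of U-statistic
regression): if ι has dense range, λₙ → 0 with λₙ > 0, x_{λₙ} = (ι*ι + λₙI)⁻¹ι*b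
(characterised by the normal equations), and the random elements x̂ₙ satisfy
‖x̂ₙ − x_{λₙ}‖ → 0 in probability, then ‖ιx̂ₙ − b‖ → 0 in probability. -/
theorem ustat_regression_consistency_assembly
    {H K : Type*}
    [NormedAddCommGroup H] [InnerProductSpace ℝ H] [CompleteSpace H]
    [NormedAddCommGroup K] [InnerProductSpace ℝ K] [CompleteSpace K]
    (ι : H →L[ℝ] K) (hdense : DenseRange (⇑ι)) (b : K)
    (lam : ℕ → ℝ) (hlampos : ∀ n, 0 < lam n)
    (hlam : Tendsto lam atTop (nhds 0))
    (xlam : ℕ → H)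
    (hxlam : ∀ n, ContinuousLinearMap.adjoint ι (ι (xlam n)) + lam n • xlam n
      = ContinuousLinearMap.adjoint ι b)
    {Ω : Type*} [MeasurableSpace Ω] (P : Measure Ω) [IsProbabilityMeasure P]
    (xhat : ℕ → Ω → H)
    (hconv : TendstoInMeasure P (fun n ω => xhat n ω - xlam n) atTop (fun _ => (0 : H))) :
    TendstoInMeasure P (fun n ω => ι (xhat n ω) - b) atTop (fun _ => (0 : K)) := by
  -- Key inequality: x_{λ} minimises the Tikhonov functional.
  have key : ∀ n (y : H),
      ‖ι (xlam n) - b‖ ^ 2 ≤ ‖ι y - b‖ ^ 2 + lam n * ‖y‖ ^ 2 := by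
    intro n y
    set x := xlam n with hx
    set r : H := y - x with hrdef
    have hy : y = x + r := by simp [hrdef]
    have h1 : ι y - b = (ι x - b) + ι r := by
      rw [hy, map_add]; abel
    have hadj : ContinuousLinearMap.adjoint ι (ι x - b) = -(lam n • x) := by
      have h := hxlam n
      rw [map_sub, ← h]; abel
    have hin : (inner ℝ (ι x - b) (ι r) : ℝ) = -(lam n * (inner ℝ x r : ℝ)) := by
      rw [← ContinuousLinearMap.adjoint_inner_left, hadj]
      simp [inner_smul_left]
    have e1 : ‖ι y - b‖ ^ 2
        = ‖ι x - b‖ ^ 2 + 2 * (inner ℝ (ι x - b) (ι r) : ℝ) + ‖ι r‖ ^ 2 := by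
      rw [h1]; exact norm_add_sq_real _ _
    have e2 : ‖y‖ ^ 2 = ‖x‖ ^ 2 + 2 * (inner ℝ x r : ℝ) + ‖r‖ ^ 2 := by
      rw [hy]; exact norm_add_sq_real _ _
    rw [e1, e2, hin]
    have hl := (hlampos n).le
    nlinarith [sq_nonneg ‖ι r‖, sq_nonneg ‖x‖, sq_nonneg ‖r‖,
      mul_nonneg hl (sq_nonneg ‖x‖), mul_nonneg hl (sq_nonneg ‖r‖)]
  -- Deterministic approximation part: ‖ι x_{λₙ} − b‖ → 0.
  have happ : Tendsto (fun n => ‖ι (xlam n) - b‖) atTop (nhds 0) := by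
    rw [NormedAddCommGroup.tendsto_nhds_zero]
    intro ε hε
    obtain ⟨y, hy⟩ : ∃ y : H, ‖ι y - b‖ < ε / 2 := by
      obtain ⟨y, hy⟩ := Metric.denseRange_iff.mp hdense b (ε / 2) (by positivity)
      exact ⟨y, by rw [← dist_eq_norm (ι y) b, dist_comm]; exact hy⟩
    have hsmall : ∀ᶠ n in atTop, lam n * ‖y‖ ^ 2 < ε ^ 2 / 2 := by
      have : Tendsto (fun n => lam n * ‖y‖ ^ 2) atTop (nhds 0) := by
        simpa using hlam.mul_const (‖y‖ ^ 2)
      exact (this.eventually (eventually_lt_nhds (by positivity : (0:ℝ) < ε ^ 2 / 2))).mono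
        (fun n h => h)
    filter_upwards [hsmall] with n hn
    have h1 : ‖ι (xlam n) - b‖ ^ 2 < ε ^ 2 := by
      have := key n y
      have h2 : ‖ι y - b‖ ^ 2 ≤ (ε / 2) ^ 2 :=
        sq_le_sq' (by nlinarith [norm_nonneg (ι y - b)]) hy.le
      nlinarith
    have : ‖ι (xlam n) - b‖ < ε := by
      nlinarith [norm_nonneg (ι (xlam n) - b)]
    simpa using this
  -- Combine with convergence in probability.
  rw [tendstoInMeasure_iff_dist] at hconv ⊢
  intro ε hε
  set C : ℝ := ‖ι‖ + 1 with hC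
  have hCpos : 0 < C := by positivity
  have hδ : 0 < ε / (2 * C) := by positivity
  have hmain := hconv (ε / (2 * C)) hδ
  have hdet : ∀ᶠ n in atTop, ‖ι (xlam n) - b‖ < ε / 2 :=
    happ.eventually (eventually_lt_nhds (by positivity : (0:ℝ) < ε / 2))
  have hsub : ∀ᶠ n in atTop,
      P {ω | ε ≤ dist (ι (xhat n ω) - b) 0}
        ≤ P {ω | ε / (2 * C) ≤ dist (xhat n ω - xlam n) 0} := by
    filter_upwards [hdet] with n hn
    apply measure_mono
    intro ω hω
    simp only [Set.mem_setOf_eq, dist_zero_right] at hω ⊢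
    by_contra hlt
    push_neg at hlt
    have hb1 : ‖ι (xhat n ω - xlam n)‖ ≤ ‖ι‖ * ‖xhat n ω - xlam n‖ :=
      ι.le_opNorm _
    have hb2 : ‖ι‖ * ‖xhat n ω - xlam n‖ ≤ C * ‖xhat n ω - xlam n‖ := by
      apply mul_le_mul_of_nonneg_right _ (norm_nonneg _)
      simp [hC]
    have hb3 : C * ‖xhat n ω - xlam n‖ < C * (ε / (2 * C)) :=
      mul_lt_mul_of_pos_left hlt hCpos
    have hb4 : C * (ε / (2 * C)) = ε / 2 := by field_simp
    have htri : ‖ι (xhat n ω) - b‖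
        ≤ ‖ι (xhat n ω - xlam n)‖ + ‖ι (xlam n) - b‖ := by
      have : ι (xhat n ω) - b = ι (xhat n ω - xlam n) + (ι (xlam n) - b) := by
        rw [map_sub]; abel
      rw [this]; exact norm_add_le _ _
    have : ‖ι (xhat n ω) - b‖ < ε := by
      calc ‖ι (xhat n ω) - b‖ ≤ ‖ι (xhat n ω - xlam n)‖ + ‖ι (xlam n) - b‖ := htri
        _ < ε / 2 + ε / 2 := by
            apply add_lt_add_of_lt_of_lt _ hn
            calc ‖ι (xhat n ω - xlam n)‖ ≤ C * ‖xhat n ω - xlam n‖ := hb1.trans hb2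
              _ < C * (ε / (2 * C)) := hb3
              _ = ε / 2 := hb4
        _ = ε := by ring
    exact absurd hω (not_le.mpr this)
  exact tendsto_of_tendsto_of_tendsto_of_le_of_le'
    tendsto_const_nhds hmain
    (Eventually.of_forall fun n => zero_le) hsub
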